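/- arXiv:2512.03638 — 6 statements merged into one kernel-verified Lean document; each statement's English description precedes it below -/
import Mathlib

section
/- Let (x, y, z, t) ∈ ℂ⁴ be a nonzero vector satisfying x² + y² + z² = t². Then |x|² + |y|² + |z|² ≥ |t|², and equality |x|² + |y|² + |z|² = |t|² holds if and only if there exist α ∈ ℂ and a real vector (a, b, c, d) ∈ ℝ⁴ such that (x, y, z, t) = (αa, αb, αc, αd). -/
open Complex

lemma mk_mul (u v p q : ℝ) (hu : u ≠ 0) (hm : u * q = v * p) :
    (p:ℂ) + q*I = (1 + (v/u)*I) * p := by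
  have hq : q = v/u * p := by field_simp; linarith
  rw [hq]; push_cast; ring

lemma aux (x1 y1 z1 t1 x2 y2 z2 t2 : ℝ)
    (hxy : x1*y2 = x2*y1) (hxz : x1*z2 = x2*z1) (hxt : x1*t2 = x2*t1)
    (hyz : y1*z2 = y2*z1) (hyt : y1*t2 = y2*t1) (hzt : z1*t2 = z2*t1) :
    ∃ (α : ℂ) (a b c d : ℝ),
      (x1:ℂ) + x2*I = α*a ∧ (y1:ℂ) + y2*I = α*b ∧ (z1:ℂ) + z2*I = α*c ∧ (t1:ℂ) + t2*I = α*d := by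
  by_cases hx : x1 ≠ 0
  · exact ⟨1 + (x2/x1)*I, x1, y1, z1, t1,
      mk_mul x1 x2 x1 x2 hx (by ring), mk_mul x1 x2 y1 y2 hx hxy,
      mk_mul x1 x2 z1 z2 hx hxz, mk_mul x1 x2 t1 t2 hx hxt⟩
  by_cases hy : y1 ≠ 0
  · exact ⟨1 + (y2/y1)*I, x1, y1, z1, t1,
      mk_mul y1 y2 x1 x2 hy (by linarith), mk_mul y1 y2 y1 y2 hy (by ring),
      mk_mul y1 y2 z1 z2 hy hyz, mk_mul y1 y2 t1 t2 hy hyt⟩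
  by_cases hz : z1 ≠ 0
  · exact ⟨1 + (z2/z1)*I, x1, y1, z1, t1,
      mk_mul z1 z2 x1 x2 hz (by linarith), mk_mul z1 z2 y1 y2 hz (by linarith),
      mk_mul z1 z2 z1 z2 hz (by ring), mk_mul z1 z2 t1 t2 hz hzt⟩
  by_cases ht : t1 ≠ 0
  · exact ⟨1 + (t2/t1)*I, x1, y1, z1, t1,
      mk_mul t1 t2 x1 x2 ht (by linarith), mk_mul t1 t2 y1 y2 ht (by linarith),
      mk_mul t1 t2 z1 z2 ht (by linarith), mk_mul t1 t2 t1 t2 ht (by ring)⟩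
  push_neg at hx hy hz ht
  exact ⟨I, x2, y2, z2, t2, by simp [hx, mul_comm], by simp [hy, mul_comm],
    by simp [hz, mul_comm], by simp [ht, mul_comm]⟩

lemma ineq (x1 y1 z1 t1 x2 y2 z2 t2 : ℝ)
    (hre : x1^2 - x2^2 + (y1^2 - y2^2) + (z1^2 - z2^2) = t1^2 - t2^2)
    (him : x1*x2 + y1*y2 + z1*z2 = t1*t2) :
    t1^2 + t2^2 ≤ x1^2 + x2^2 + (y1^2 + y2^2) + (z1^2 + z2^2) := by
  nlinarith [sq_nonneg (x1*y2 - x2*y1), sq_nonneg (x1*z2 - x2*z1), sq_nonneg (y1*z2 - y2*z1),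
    sq_nonneg (x1^2 + y1^2 + z1^2 - t1^2), sq_nonneg t1, sq_nonneg t2,
    sq_nonneg (t1 - t2), sq_nonneg (t1 + t2)]

/-- **Lemma 3.17** (boundary of the 2-dimensional period domain of K3-type).
If `(x, y, z, t) ∈ ℂ⁴` is a nonzero vector with `x² + y² + z² = t²`, then
`|x|² + |y|² + |z|² ≥ |t|²`, with equality if and only if `(x, y, z, t)` is a common
complex multiple of a real vector `(a, b, c, d) ∈ ℝ⁴`. -/
theorem stmt_0 (x y z t : ℂ) (hne : ¬(x = 0 ∧ y = 0 ∧ z = 0 ∧ t = 0))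
    (h : x ^ 2 + y ^ 2 + z ^ 2 = t ^ 2) :
    ‖t‖ ^ 2 ≤ ‖x‖ ^ 2 + ‖y‖ ^ 2 + ‖z‖ ^ 2 ∧
    (‖x‖ ^ 2 + ‖y‖ ^ 2 + ‖z‖ ^ 2 = ‖t‖ ^ 2 ↔
      ∃ (α : ℂ) (a b c d : ℝ), x = α * a ∧ y = α * b ∧ z = α * c ∧ t = α * d) := by
  have hre0 := congrArg Complex.re h
  have him0 := congrArg Complex.im h
  simp [pow_two, Complex.mul_re, Complex.mul_im] at hre0 him0
  have hre : x.re^2 - x.im^2 + (y.re^2 - y.im^2) + (z.re^2 - z.im^2) = t.re^2 - t.im^2 := by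
    ring_nf; ring_nf at hre0; linarith
  have him : x.re*x.im + y.re*y.im + z.re*z.im = t.re*t.im := by
    ring_nf; ring_nf at him0; linarith
  have ax : ‖x‖ ^ 2 = x.re^2 + x.im^2 := by rw [Complex.sq_norm, Complex.normSq_apply]; ring
  have ay : ‖y‖ ^ 2 = y.re^2 + y.im^2 := by rw [Complex.sq_norm, Complex.normSq_apply]; ring
  have az : ‖z‖ ^ 2 = z.re^2 + z.im^2 := by rw [Complex.sq_norm, Complex.normSq_apply]; ring
  have at' : ‖t‖ ^ 2 = t.re^2 + t.im^2 := by rw [Complex.sq_norm, Complex.normSq_apply]; ring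
  have hineq := ineq x.re y.re z.re t.re x.im y.im z.im t.im hre him
  refine ⟨by rw [ax, ay, az, at']; linarith, ?_, ?_⟩
  · -- forward: equality → common multiple
    intro heq
    rw [ax, ay, az, at'] at heq
    have hA : x.re^2 + y.re^2 + z.re^2 = t.re^2 := by linarith
    have hB : x.im^2 + y.im^2 + z.im^2 = t.im^2 := by linarith
    have sum0 : (x.re*y.im - x.im*y.re)^2 + (x.re*z.im - x.im*z.re)^2
        + (x.re*t.im - x.im*t.re)^2 + (y.re*z.im - y.im*z.re)^2
        + (y.re*t.im - y.im*t.re)^2 + (z.re*t.im - z.im*t.re)^2 = 0 := by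
      linear_combination (2*t.im^2) * hA + (2*t.re^2) * hB
        + (x.re^2 + y.re^2 + z.re^2 - t.re^2) * hB
        + (-4*t.re*t.im - (x.re*x.im + y.re*y.im + z.re*z.im) + t.re*t.im) * him
    have s1 := sq_nonneg (x.re*y.im - x.im*y.re)
    have s2 := sq_nonneg (x.re*z.im - x.im*z.re)
    have s3 := sq_nonneg (x.re*t.im - x.im*t.re)
    have s4 := sq_nonneg (y.re*z.im - y.im*z.re)
    have s5 := sq_nonneg (y.re*t.im - y.im*t.re)
    have s6 := sq_nonneg (z.re*t.im - z.im*t.re)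
    have m1 : x.re*y.im = x.im*y.re := by
      have := sq_eq_zero_iff.mp (by linarith : (x.re*y.im - x.im*y.re)^2 = 0); linarith
    have m2 : x.re*z.im = x.im*z.re := by
      have := sq_eq_zero_iff.mp (by linarith : (x.re*z.im - x.im*z.re)^2 = 0); linarith
    have m3 : x.re*t.im = x.im*t.re := by
      have := sq_eq_zero_iff.mp (by linarith : (x.re*t.im - x.im*t.re)^2 = 0); linarith
    have m4 : y.re*z.im = y.im*z.re := by
      have := sq_eq_zero_iff.mp (by linarith : (y.re*z.im - y.im*z.re)^2 = 0); linarith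
    have m5 : y.re*t.im = y.im*t.re := by
      have := sq_eq_zero_iff.mp (by linarith : (y.re*t.im - y.im*t.re)^2 = 0); linarith
    have m6 : z.re*t.im = z.im*t.re := by
      have := sq_eq_zero_iff.mp (by linarith : (z.re*t.im - z.im*t.re)^2 = 0); linarith
    obtain ⟨α, a, b, c, d, h1, h2, h3, h4⟩ :=
      aux x.re y.re z.re t.re x.im y.im z.im t.im m1 m2 m3 m4 m5 m6
    exact ⟨α, a, b, c, d, by rw [← h1]; exact (Complex.re_add_im x).symm,
      by rw [← h2]; exact (Complex.re_add_im y).symm,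
      by rw [← h3]; exact (Complex.re_add_im z).symm,
      by rw [← h4]; exact (Complex.re_add_im t).symm⟩
  · -- reverse
    rintro ⟨α, a, b, c, d, rfl, rfl, rfl, rfl⟩
    have hα : α ≠ 0 := by
      rintro rfl; exact hne ⟨by simp, by simp, by simp, by simp⟩
    have hc : ((a:ℂ)^2 + b^2 + c^2) = (d:ℂ)^2 := by
      have h2 : α^2 * ((a:ℂ)^2 + b^2 + c^2) = α^2 * (d:ℂ)^2 := by linear_combination h
      exact mul_left_cancel₀ (pow_ne_zero 2 hα) h2
    have hr : a^2 + b^2 + c^2 = d^2 := by exact_mod_cast hc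
    simp only [norm_mul, mul_pow, Complex.norm_real, Real.norm_eq_abs, _root_.sq_abs]
    linear_combination (‖α‖ ^ 2) * hr
end

section
/- For all complex numbers x₀, x₁, y₀, y₁ one has |x₀y₀ + x₁y₁|² + |x₁y₁ − x₀y₀|² + |x₁y₀ − x₀y₁|² − |x₁y₀ + x₀y₁|² = 2·|x₀·conj(y₀) − x₁·conj(y₁)|². Consequently, for nonzero (x₀,x₁), (y₀,y₁) ∈ ℂ², the point ι([x₀:x₁],[y₀:y₁]) lies in D₂ if and only if x₀·conj(y₀) ≠ x₁·conj(y₁); in particular, for each fixed [y₀:y₁] ∈ ℙ¹ the set of [x₀:x₁] with ι([x₀:x₁],[y₀:y₁]) ∉ D₂ is the single point [conj(y₁):conj(y₀)]. -/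
/-- The function `E` whose positivity characterizes membership of
`ι([x₀:x₁],[y₀:y₁]) = [x₀y₀+x₁y₁ : i(x₁y₁−x₀y₀) : x₁y₀−x₀y₁ : x₁y₀+x₀y₁]` in the
2-dimensional period domain `D₂ = {[x:y:z:t] : x²+y²+z²=t², |x|²+|y|²+|z|²−|t|² > 0}`. -/
noncomputable def E (x₀ x₁ y₀ y₁ : ℂ) : ℝ :=
  ‖x₀ * y₀ + x₁ * y₁‖ ^ 2 + ‖x₁ * y₁ - x₀ * y₀‖ ^ 2 +
    ‖x₁ * y₀ - x₀ * y₁‖ ^ 2 - ‖x₁ * y₀ + x₀ * y₁‖ ^ 2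

lemma E_eq (x₀ x₁ y₀ y₁ : ℂ) :
    E x₀ x₁ y₀ y₁ =
      2 * ‖x₀ * (starRingEnd ℂ) y₀ - x₁ * (starRingEnd ℂ) y₁‖ ^ 2 := by
  simp only [E, Complex.sq_norm, Complex.normSq_apply, Complex.add_re, Complex.add_im,
    Complex.sub_re, Complex.sub_im, Complex.mul_re, Complex.mul_im, Complex.conj_re,
    Complex.conj_im]
  ring

/-- **(Behind Corollary 3.21.)** One has
`E(x₀,x₁,y₀,y₁) = 2·|x₀·conj(y₀) − x₁·conj(y₁)|²`; consequently, for nonzero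
`(x₀,x₁), (y₀,y₁) ∈ ℂ²`, the point `ι([x₀:x₁],[y₀:y₁])` lies in `D₂` iff
`x₀·conj(y₀) ≠ x₁·conj(y₁)`, and for fixed `[y₀:y₁]` the unique point `[x₀:x₁] ∈ ℙ¹` with
`ι([x₀:x₁],[y₀:y₁]) ∉ D₂` is `[conj(y₁):conj(y₀)]`. -/
theorem stmt_1 :
    (∀ x₀ x₁ y₀ y₁ : ℂ,
        E x₀ x₁ y₀ y₁ =
          2 * ‖x₀ * (starRingEnd ℂ) y₀ - x₁ * (starRingEnd ℂ) y₁‖ ^ 2) ∧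
    (∀ x₀ x₁ y₀ y₁ : ℂ, ¬(x₀ = 0 ∧ x₁ = 0) → ¬(y₀ = 0 ∧ y₁ = 0) →
        ((0 < E x₀ x₁ y₀ y₁ ↔ x₀ * (starRingEnd ℂ) y₀ ≠ x₁ * (starRingEnd ℂ) y₁) ∧
          (x₀ * (starRingEnd ℂ) y₀ = x₁ * (starRingEnd ℂ) y₁ ↔
            ∃ c : ℂ, c ≠ 0 ∧ x₀ = c * (starRingEnd ℂ) y₁ ∧ x₁ = c * (starRingEnd ℂ) y₀))) := by
  refine ⟨E_eq, fun x₀ x₁ y₀ y₁ hx hy => ⟨?_, ?_⟩⟩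
  · rw [E_eq]
    constructor
    · intro h he
      rw [he, sub_self] at h
      simp at h
    · intro h
      have : x₀ * (starRingEnd ℂ) y₀ - x₁ * (starRingEnd ℂ) y₁ ≠ 0 := sub_ne_zero.mpr h
      have h2 : 0 < ‖x₀ * (starRingEnd ℂ) y₀ - x₁ * (starRingEnd ℂ) y₁‖ :=
        norm_pos_iff.mpr this
      positivity
  · constructor
    · intro h
      by_cases hy0 : y₀ = 0
      · have hy1 : y₁ ≠ 0 := fun h1 => hy ⟨hy0, h1⟩
        refine ⟨x₀ / (starRingEnd ℂ) y₁, ?_, ?_, ?_⟩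
        · have hx1 : x₁ = 0 := by
            have := h
            rw [hy0, map_zero, mul_zero] at this
            exact (mul_eq_zero.mp this.symm).resolve_right (by simpa using hy1)
          have hx0 : x₀ ≠ 0 := fun h0 => hx ⟨h0, hx1⟩
          exact div_ne_zero hx0 (by simpa using hy1)
        · exact (div_mul_cancel₀ _ (by simpa using hy1 : (starRingEnd ℂ) y₁ ≠ 0)).symm
        · have hx1 : x₁ = 0 := by
            rw [hy0, map_zero, mul_zero] at h
            exact (mul_eq_zero.mp h.symm).resolve_right (by simpa using hy1)
          simp [hx1, hy0]
      · refine ⟨x₁ / (starRingEnd ℂ) y₀, ?_, ?_, ?_⟩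
        · intro hc
          have hy0' : (starRingEnd ℂ) y₀ ≠ 0 := by simpa using hy0
          have hx1 : x₁ = 0 := by
            rcases div_eq_zero_iff.mp hc with h1 | h1
            · exact h1
            · exact absurd h1 hy0'
          have hx0 : x₀ = 0 := by
            rw [hx1, zero_mul] at h
            exact (mul_eq_zero.mp h).resolve_right hy0'
          exact hx ⟨hx0, hx1⟩
        · have hy0' : (starRingEnd ℂ) y₀ ≠ 0 := by simpa using hy0
          rw [div_mul_eq_mul_div, eq_div_iff hy0']
          linear_combination h
        · have hy0' : (starRingEnd ℂ) y₀ ≠ 0 := by simpa using hy0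
          exact (div_mul_cancel₀ _ hy0').symm
    · rintro ⟨c, hc, h0, h1⟩
      rw [h0, h1]; ring
end

section
/- Let q : ℂ⁴ × ℂ⁴ → ℂ be the complex-bilinear form q(a,b) = a₁b₁ + a₂b₂ + a₃b₃ − a₄b₄. For x, y ∈ ℂ set u := (xy+1, i(1−xy), y−x, x+y), v_x := (y, −iy, −1, 1), v_y := (x, −ix, 1, 1), and write ū, v̄_x, v̄_y for componentwise complex conjugates. Then: (i) q(u, ū) = 2·|x·conj(y) − 1|²; (ii) q(v_x, v̄_x)·q(u, ū) = q(v_x, ū)·q(u, v̄_x); (iii) q(v_y, v̄_y)·q(u, ū) = q(v_y, ū)·q(u, v̄_y); (iv) (q(v_x, ū)·q(u, v̄_y) − q(v_x, v̄_y)·q(u, ū))·(x·conj(y) − 1)² = q(u, ū)². -/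
/-- The complex-bilinear form `q(a,b) = a₁b₁ + a₂b₂ + a₃b₃ − a₄b₄` on `ℂ⁴`. -/
def q4 (a b : ℂ × ℂ × ℂ × ℂ) : ℂ :=
  a.1 * b.1 + a.2.1 * b.2.1 + a.2.2.1 * b.2.2.1 - a.2.2.2 * b.2.2.2

/-- Componentwise complex conjugation on `ℂ⁴`. -/
def conj4 (a : ℂ × ℂ × ℂ × ℂ) : ℂ × ℂ × ℂ × ℂ :=
  ((starRingEnd ℂ) a.1, (starRingEnd ℂ) a.2.1, (starRingEnd ℂ) a.2.2.1, (starRingEnd ℂ) a.2.2.2)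

/-- **Proposition 3.19** (the Griffiths–Schmid metric on the 2-dimensional period domain
has matrix `[[0, (x·conj(y)−1)⁻²], [(y·conj(x)−1)⁻², 0]]`). With
`u = (xy+1, i(1−xy), y−x, x+y)`, `vₓ = (y, −iy, −1, 1)`, `v_y = (x, −ix, 1, 1)`:
(i) `q(u,ū) = 2|x·conj(y)−1|²`; (ii) `q(vₓ,v̄ₓ)q(u,ū) = q(vₓ,ū)q(u,v̄ₓ)`;
(iii) `q(v_y,v̄_y)q(u,ū) = q(v_y,ū)q(u,v̄_y)`;
(iv) `(q(vₓ,ū)q(u,v̄_y) − q(vₓ,v̄_y)q(u,ū))·(x·conj(y)−1)² = q(u,ū)²`. -/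
theorem stmt_3 (x y : ℂ) :
    let u : ℂ × ℂ × ℂ × ℂ := (x * y + 1, Complex.I * (1 - x * y), y - x, x + y)
    let vx : ℂ × ℂ × ℂ × ℂ := (y, -Complex.I * y, -1, 1)
    let vy : ℂ × ℂ × ℂ × ℂ := (x, -Complex.I * x, 1, 1)
    q4 u (conj4 u) = ((2 * ‖x * (starRingEnd ℂ) y - 1‖ ^ 2 : ℝ) : ℂ) ∧
    q4 vx (conj4 vx) * q4 u (conj4 u) = q4 vx (conj4 u) * q4 u (conj4 vx) ∧
    q4 vy (conj4 vy) * q4 u (conj4 u) = q4 vy (conj4 u) * q4 u (conj4 vy) ∧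
    (q4 vx (conj4 u) * q4 u (conj4 vy) - q4 vx (conj4 vy) * q4 u (conj4 u)) *
        (x * (starRingEnd ℂ) y - 1) ^ 2 = q4 u (conj4 u) ^ 2 := by
  intro u vx vy
  have h1 : ((2 * ‖x * (starRingEnd ℂ) y - 1‖ ^ 2 : ℝ) : ℂ)
      = 2 * (x * (starRingEnd ℂ) y - 1) * ((starRingEnd ℂ) x * y - 1) := by
    rw [← Complex.normSq_eq_norm_sq]
    push_cast [Complex.normSq_eq_conj_mul_self]
    simp [map_mul, map_sub, Complex.conj_conj]
    ring
  refine ⟨?_, ?_, ?_, ?_⟩ <;>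
    simp only [q4, conj4, u, vx, vy, map_mul, map_add, map_sub, map_one, map_neg,
      Complex.conj_I, h1] <;>
    ring_nf <;>
    simp [Complex.I_sq] <;> ring
end

section
/- Let S be a connected, Hausdorff, second-countable smooth 2-dimensional real manifold, let (U_i)_{i∈I} be an open cover of S, and let B ⊆ S be an at most countable subset. Then there exist a function ψ : B → I and a locally finite cover (F_j)_{j∈J} of S by closed subsets such that: (1) for every x ∈ B, x ∈ U_{ψ(x)}; (2) for every j ∈ J there exists i ∈ I with F_j ⊆ U_i; (3) for every j ∈ J, the set F_j ∩ B is open in the subspace topology of B, and ψ is constant on F_j ∩ B. -/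
open scoped Manifold

open Set Filter Metric TopologicalSpace MeasureTheory
open scoped Topology

/-- **Lemma 4.13** (adaptation of a lemma of Greb–Schwald to non-compact surfaces).
Let `S` be a connected, Hausdorff, second-countable smooth surface, `(U i)_{i ∈ I}` an
open cover of `S` and `B ⊆ S` an at most countable subset. Then there exist `ψ : B → I`
and a locally finite closed cover `(F j)_{j ∈ J}` of `S` such that:
(1) every `x ∈ B` lies in `U (ψ x)`;
(2) every `F j` is contained in some `U i`;
(3) every `F j ∩ B` is open in the subspace topology of `B` and `ψ` is constant on it. -/
theorem stmt_7 {S : Type} [TopologicalSpace S] [T2Space S] [ConnectedSpace S]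
    [SecondCountableTopology S] [ChartedSpace (EuclideanSpace ℝ (Fin 2)) S]
    [IsManifold (𝓡 2) (⊤ : ℕ∞) S]
    {I : Type} (U : I → Set S) (hUopen : ∀ i, IsOpen (U i))
    (hUcov : (⋃ i, U i) = Set.univ)
    (B : Set S) (hB : B.Countable) :
    ∃ (ψ : B → I) (J : Type) (F : J → Set S),
      (∀ x : B, (x : S) ∈ U (ψ x)) ∧
      (∀ j, IsClosed (F j)) ∧
      LocallyFinite F ∧
      (⋃ j, F j) = Set.univ ∧
      (∀ j, ∃ i, F j ⊆ U i) ∧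
      (∀ j, IsOpen ((fun x : B => (x : S)) ⁻¹' F j)) ∧
      (∀ j, ∀ x y : B, (x : S) ∈ F j → (y : S) ∈ F j → ψ x = ψ y) := by
  classical
  haveI := (𝓡 2).locallyCompactSpace
  haveI := ChartedSpace.locallyCompactSpace (EuclideanSpace ℝ (Fin 2)) S
  haveI : MetrizableSpace S := Manifold.metrizableSpace (𝓡 2) S
  letI : MetricSpace S := TopologicalSpace.metrizableSpaceMetric S
  -- choose an index for each point
  have hxU : ∀ x : S, ∃ i, x ∈ U i := fun x => Set.mem_iUnion.1 (hUcov ▸ Set.mem_univ x)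
  choose ix hix using hxU
  -- the "good radii" basis for the neighborhood filter
  set p : S → ℝ → Prop := fun x r =>
    0 < r ∧ Metric.closedBall x r ⊆ U (ix x) ∧ ∀ b ∈ B, dist b x ≠ r with hp
  have hbasis : ∀ x : S, (𝓝 x).HasBasis (p x) (fun r => Metric.closedBall x r) := by
    intro x
    constructor
    intro V
    constructor
    · intro hV
      rcases Metric.nhds_basis_closedBall.mem_iff.1 hV with ⟨ε, hε, hεV⟩
      rcases Metric.nhds_basis_closedBall.mem_iff.1
        ((hUopen (ix x)).mem_nhds (hix x)) with ⟨δ, hδ, hδU⟩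
      set m := min ε δ with hm
      have hm0 : 0 < m := lt_min hε hδ
      have hnot : ¬ Set.Ioo (0 : ℝ) m ⊆ (fun b => dist b x) '' B := by
        intro hsub
        have h0 : volume ((fun b => dist b x) '' B) = 0 :=
          (hB.image _).measure_zero volume
        have h1 : volume (Set.Ioo (0 : ℝ) m) = 0 :=
          le_antisymm (h0 ▸ measure_mono hsub) zero_le
        rw [Real.volume_Ioo] at h1
        simp only [ENNReal.ofReal_eq_zero, sub_zero] at h1
        exact absurd h1 (not_le.2 hm0)
      rcases Set.not_subset.1 hnot with ⟨r, hrm, hrB⟩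
      refine ⟨r, ⟨hrm.1, ?_, ?_⟩, ?_⟩
      · exact (Metric.closedBall_subset_closedBall
          (le_of_lt (lt_of_lt_of_le hrm.2 (min_le_right _ _)))).trans hδU
      · intro b hb hdist
        exact hrB ⟨b, hb, hdist⟩
      · exact (Metric.closedBall_subset_closedBall
          (le_of_lt (lt_of_lt_of_le hrm.2 (min_le_left _ _)))).trans hεV
    · rintro ⟨r, ⟨hr0, -, -⟩, hsub⟩
      exact mem_of_superset (Metric.closedBall_mem_nhds x hr0) hsub
  -- get a locally finite cover by good closed balls
  obtain ⟨α, c, r, hpr, hcov, hfin⟩ :=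
    refinement_of_locallyCompact_sigmaCompact_of_nhds_basis hbasis
  -- the cover is countable
  have hcnt : (Set.univ : Set α).Countable :=
    hfin.countable_univ fun a =>
      (Metric.nonempty_closedBall.2 (le_of_lt (hpr a).1))
  haveI : Countable α := Set.countable_univ_iff.1 hcnt
  obtain ⟨e, he⟩ := Countable.exists_injective_nat α
  -- points of B on a closed ball are in the open ball
  have hBC : ∀ (k : α) (b : S), b ∈ B →
      (b ∈ Metric.closedBall (c k) (r k) ↔ b ∈ Metric.ball (c k) (r k)) := by
    intro k b hb
    constructor
    · intro h
      exact Metric.mem_ball.2 (lt_of_le_of_ne (Metric.mem_closedBall.1 h)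
        ((hpr k).2.2 b hb))
    · exact fun h => Metric.ball_subset_closedBall h
  -- the closed cover
  set F : α → Set S := fun j =>
    Metric.closedBall (c j) (r j) \ ⋃ k ∈ {k | e k < e j}, Metric.ball (c k) (r k) with hF
  have hfinset : ∀ j, {k | e k < e j}.Finite := fun j =>
    Set.Finite.preimage (he.injOn) (Set.finite_Iio (e j))
  have hFsub : ∀ j, F j ⊆ Metric.closedBall (c j) (r j) := fun j => Set.diff_subset
  -- basic membership description
  have hFmem : ∀ (j) (x : S), x ∈ F j ↔ x ∈ Metric.closedBall (c j) (r j) ∧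
      ∀ k, e k < e j → x ∉ Metric.ball (c k) (r k) := by
    intro j x
    simp only [hF, Set.mem_diff, Set.mem_iUnion, Set.mem_setOf_eq, not_exists]
  -- every point of B lies in some open ball
  have hex : ∀ x : B, ∃ n, ∃ j, e j = n ∧ (x : S) ∈ Metric.ball (c j) (r j) := by
    intro x
    have : (x : S) ∈ ⋃ a, Metric.closedBall (c a) (r a) := hcov ▸ Set.mem_univ _
    rcases Set.mem_iUnion.1 this with ⟨j, hj⟩
    exact ⟨e j, j, rfl, (hBC j x x.2).1 hj⟩
  -- define ψ via the minimal index
  set ψ : B → I := fun x => ix (c (Classical.choose (Nat.find_spec (hex x)))) with hψ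
  -- key: on F j ∩ B, the minimal index equals e j
  have hkey : ∀ (j) (x : B), (x : S) ∈ F j →
      Classical.choose (Nat.find_spec (hex x)) = j := by
    intro j x hxF
    rcases (hFmem j (x : S)).1 hxF with ⟨hxball, hxmin⟩
    have hPj : ∃ j', e j' = e j ∧ (x : S) ∈ Metric.ball (c j') (r j') :=
      ⟨j, rfl, (hBC j x x.2).1 hxball⟩
    have hle : Nat.find (hex x) ≤ e j := Nat.find_le hPj
    have hge : ¬ Nat.find (hex x) < e j := by
      intro hlt
      rcases Nat.find_spec (hex x) with ⟨j', hj'e, hj'ball⟩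
      exact hxmin j' (hj'e ▸ hlt) hj'ball
    have heq : Nat.find (hex x) = e j := le_antisymm hle (not_lt.1 hge)
    have hspec := Classical.choose_spec (Nat.find_spec (hex x))
    exact he (hspec.1.trans heq)
  refine ⟨ψ, α, F, ?_, ?_, ?_, ?_, ?_, ?_, ?_⟩
  · -- x ∈ U (ψ x)
    intro x
    have hspec := Classical.choose_spec (Nat.find_spec (hex x))
    exact (hpr _).2.1 (Metric.ball_subset_closedBall hspec.2)
  · -- closedness
    intro j
    exact Metric.isClosed_closedBall.sdiff (isOpen_biUnion fun k _ => Metric.isOpen_ball)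
  · -- local finiteness
    exact hfin.subset hFsub
  · -- covering
    apply Set.eq_univ_of_forall
    intro x
    have hx : ∃ n, ∃ j, e j = n ∧ x ∈ Metric.closedBall (c j) (r j) := by
      have : x ∈ ⋃ a, Metric.closedBall (c a) (r a) := hcov ▸ Set.mem_univ _
      rcases Set.mem_iUnion.1 this with ⟨j, hj⟩
      exact ⟨e j, j, rfl, hj⟩
    rcases Nat.find_spec hx with ⟨j, hje, hjball⟩
    refine Set.mem_iUnion.2 ⟨j, (hFmem j x).2 ⟨hjball, ?_⟩⟩
    intro k hk hxk
    exact Nat.find_min hx (hje ▸ hk) ⟨k, rfl, Metric.ball_subset_closedBall hxk⟩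
  · -- contained in some U i
    intro j
    exact ⟨ix (c j), (hFsub j).trans (hpr j).2.1⟩
  · -- openness of the trace on B
    intro j
    have heq : (fun x : B => (x : S)) ⁻¹' F j =
        ((fun x : B => (x : S)) ⁻¹' Metric.ball (c j) (r j)) ∩
        ⋂ k ∈ {k | e k < e j}, (fun x : B => (x : S)) ⁻¹' (Metric.closedBall (c k) (r k))ᶜ := by
      ext x
      simp only [Set.mem_preimage, Set.mem_inter_iff, Set.mem_iInter, Set.mem_compl_iff,
        Set.mem_setOf_eq, hFmem]
      constructor
      · rintro ⟨h1, h2⟩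
        exact ⟨(hBC j x x.2).1 h1, fun k hk hxk => h2 k hk ((hBC k x x.2).1 hxk)⟩
      · rintro ⟨h1, h2⟩
        exact ⟨Metric.ball_subset_closedBall h1,
          fun k hk hxk => h2 k hk (Metric.ball_subset_closedBall hxk)⟩
    rw [heq]
    exact (Metric.isOpen_ball.preimage continuous_subtype_val).inter
      ((hfinset j).isOpen_biInter fun k _ =>
        (Metric.isClosed_closedBall.isOpen_compl).preimage continuous_subtype_val)
  · -- ψ is constant on F j ∩ B
    intro j x y hx hy
    simp only [hψ]
    rw [hkey j x hx, hkey j y hy]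
end

section
/- (a) For every λ ∈ ℂ and every real s with λ·s ≠ 1, one has Re(λ/(λs−1)²) = (Re(λ)·|λ|²·s² − 2·|λ|²·s + Re(λ)) / |λs−1|⁴. (b) Let α ∈ ℂ with Re(α) > 0 and Im(α) ≠ 0, and set C_α := (|α| − |Im(α)|)/(|α|·Re(α)). Then C_α > 0, and for every positive integer n and every real s with 0 ≤ s < C_α·n, one has (α/n)·s ≠ 1 and Re((α/n)/((α/n)·s − 1)²) > 0. -/
lemma partA (lam : ℂ) (s : ℝ) (h : lam * (s : ℂ) ≠ 1) :
    (lam / (lam * (s : ℂ) - 1) ^ 2).re =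
      (lam.re * ‖lam‖ ^ 2 * s ^ 2 - 2 * ‖lam‖ ^ 2 * s + lam.re) /
        ‖lam * (s : ℂ) - 1‖ ^ 4 := by
  have hD : (0:ℝ) < Complex.normSq (lam * (s:ℂ) - 1) :=
    Complex.normSq_pos.mpr (sub_ne_zero.mpr h)
  have habs : (‖lam * (s:ℂ) - 1‖)^4 = (Complex.normSq (lam * (s:ℂ) - 1))^2 := by
    rw [show (4:ℕ) = 2*2 from rfl, pow_mul, Complex.sq_norm]
  rw [Complex.div_re, habs, Complex.sq_norm, map_pow,
    ← add_div, div_eq_div_iff (by positivity) (by positivity)]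
  simp only [Complex.normSq_apply, Complex.mul_re, Complex.mul_im, Complex.sub_re,
    Complex.sub_im, Complex.ofReal_re, Complex.ofReal_im, Complex.one_re, Complex.one_im,
    pow_two]
  ring

lemma partB (α : ℂ) (ha : 0 < α.re) (hb : α.im ≠ 0) :
        0 < (‖α‖ - |α.im|) / (‖α‖ * α.re) ∧
        ∀ n : ℕ, 0 < n → ∀ s : ℝ, 0 ≤ s →
          s < (‖α‖ - |α.im|) / (‖α‖ * α.re) * n →
          (α / (n : ℂ)) * (s : ℂ) ≠ 1 ∧
          0 < ((α / (n : ℂ)) / ((α / (n : ℂ)) * (s : ℂ) - 1) ^ 2).re := by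
  set r := ‖α‖ with hr
  have hr2 : r ^ 2 = α.re ^ 2 + α.im ^ 2 := by
    rw [hr, Complex.sq_norm, Complex.normSq_apply]; ring
  have hbr : |α.im| < r := by
    refine lt_of_pow_lt_pow_left₀ 2 (norm_nonneg α) ?_
    rw [hr2]; nlinarith [abs_nonneg α.im, sq_abs α.im]
  have hbpos : 0 < |α.im| := abs_pos.mpr hb
  have hrpos : 0 < r := lt_trans hbpos hbr
  have hC : 0 < (r - |α.im|) / (r * α.re) :=
    div_pos (by linarith) (by positivity)
  refine ⟨hC, fun n hn s hs0 hs => ?_⟩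
  have hnR : (0:ℝ) < (n:ℝ) := Nat.cast_pos.mpr hn
  have hnC : (n:ℂ) ≠ 0 := Nat.cast_ne_zero.mpr hn.ne'
  -- key inequality
  have hkey : α.re * r * s < (r - |α.im|) * n := by
    rw [div_mul_eq_mul_div, lt_div_iff₀ (by positivity)] at hs
    nlinarith [hs]
  have hne : (α / (n : ℂ)) * (s : ℂ) ≠ 1 := by
    intro h
    have h' : α * (s : ℂ) = (n : ℂ) := by
      field_simp at h
      linear_combination h
    have him := congrArg Complex.im h'
    simp [Complex.mul_im] at him
    rcases him with him | him
    · exact hb him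
    · rw [him] at h'
      simp only [Complex.ofReal_zero, mul_zero] at h'
      exact hn.ne' (by exact_mod_cast h'.symm)
  refine ⟨hne, ?_⟩
  rw [partA _ _ hne]
  have hlre : (α / (n:ℂ)).re = α.re / n := by
    rw [show ((n:ℂ)) = ((n:ℝ):ℂ) by push_cast; rfl, Complex.div_ofReal_re]
  have hlabs : ‖α / (n:ℂ)‖ = r / n := by
    rw [norm_div, Complex.norm_natCast, hr]
  rw [hlre, hlabs]
  have hden : 0 < ‖(α / (n:ℂ)) * (s:ℂ) - 1‖ ^ 4 :=
    pow_pos (norm_pos_iff.mpr (sub_ne_zero.mpr hne)) 4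
  apply div_pos _ hden
  have hsq : (|α.im| * n) ^ 2 < (r * n - α.re * r * s) ^ 2 := by
    have h1 : 0 ≤ |α.im| * n := by positivity
    have h2 : |α.im| * n < r * n - α.re * r * s := by nlinarith
    nlinarith
  have hid : α.re * (α.re * r ^ 2 * s ^ 2 - 2 * r ^ 2 * (n:ℝ) * s + α.re * (n:ℝ) ^ 2) =
      (r * n - α.re * r * s) ^ 2 - α.im ^ 2 * (n:ℝ) ^ 2 := by
    linear_combination -(n:ℝ)^2 * hr2
  have hQ : 0 < α.re * r ^ 2 * s ^ 2 - 2 * r ^ 2 * (n:ℝ) * s + α.re * (n:ℝ) ^ 2 := by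
    nlinarith [hid, hsq, sq_abs α.im, ha]
  have : α.re / n * (r / n) ^ 2 * s ^ 2 - 2 * (r / n) ^ 2 * s + α.re / n =
      (α.re * r ^ 2 * s ^ 2 - 2 * r ^ 2 * (n:ℝ) * s + α.re * (n:ℝ) ^ 2) / n^3 := by
    field_simp
  rw [this]
  positivity

/-- **Lemma 5.6**: (a) for `λ ∈ ℂ` and real `s` with `λs ≠ 1`,
`Re(λ/(λs−1)²) = (Re(λ)|λ|²s² − 2|λ|²s + Re(λ))/|λs−1|⁴`;
(b) for `α ∈ ℂ` with `Re(α) > 0` and `Im(α) ≠ 0`, the constant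
`C_α := (|α| − |Im(α)|)/(|α|·Re(α))` is positive and for every positive integer `n`
and every real `s` with `0 ≤ s < C_α·n` one has `(α/n)·s ≠ 1` and
`Re((α/n)/((α/n)s − 1)²) > 0`. -/
theorem stmt_9 :
    (∀ (lam : ℂ) (s : ℝ), lam * (s : ℂ) ≠ 1 →
        (lam / (lam * (s : ℂ) - 1) ^ 2).re =
          (lam.re * ‖lam‖ ^ 2 * s ^ 2 - 2 * ‖lam‖ ^ 2 * s + lam.re) /
            ‖lam * (s : ℂ) - 1‖ ^ 4) ∧
    (∀ α : ℂ, 0 < α.re → α.im ≠ 0 →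
        0 < (‖α‖ - |α.im|) / (‖α‖ * α.re) ∧
        ∀ n : ℕ, 0 < n → ∀ s : ℝ, 0 ≤ s →
          s < (‖α‖ - |α.im|) / (‖α‖ * α.re) * n →
          (α / (n : ℂ)) * (s : ℂ) ≠ 1 ∧
          0 < ((α / (n : ℂ)) / ((α / (n : ℂ)) * (s : ℂ) - 1) ^ 2).re) :=
  ⟨partA, partB⟩
end

section
/- Let n ∈ ℕ and let P, Q : Fin(n+1) → ℂ[X] be tuples of polynomials such that Q_{j₀} ≠ 0 for some index j₀, and suppose that for all z ∈ ℂ and all indices i, j one has P_i(exp z)·Q_j(z) = P_j(exp z)·Q_i(z). Then there exist a polynomial R ∈ ℂ[X] and constants c₀, …, c_n ∈ ℂ such that P_i = c_i·R for every i; in particular, if the P_i have no common zero, the holomorphic map ℂ → ℙⁿ(ℂ), z ↦ [P₀(z) : … : P_n(z)], is constant. -/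
/-- **Algebraic claim underlying Corollary 6.8**: if `P, Q : Fin (n+1) → ℂ[X]` are tuples
of polynomials with some `Q j₀ ≠ 0` and `P_i(e^z)·Q_j(z) = P_j(e^z)·Q_i(z)` for all
`z ∈ ℂ` and all indices `i, j`, then all `P_i` are constant multiples `c_i·R` of a single
polynomial `R`; in particular, if the `P_i` have no common zero, the holomorphic map
`ℂ → ℙⁿ(ℂ)`, `z ↦ [P₀(z) : … : P_n(z)]`, is constant. -/
theorem stmt_13 (n : ℕ) (P Q : Fin (n + 1) → Polynomial ℂ)
    (hQ : ∃ j₀, Q j₀ ≠ 0)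
    (h : ∀ (z : ℂ) (i j : Fin (n + 1)),
      (P i).eval (Complex.exp z) * (Q j).eval z = (P j).eval (Complex.exp z) * (Q i).eval z) :
    (∃ (R : Polynomial ℂ) (c : Fin (n + 1) → ℂ), ∀ i, P i = Polynomial.C (c i) * R) ∧
    ((∀ z : ℂ, ∃ i, (P i).eval z ≠ 0) →
      ∀ z w : ℂ, ∃ t : ℂ, t ≠ 0 ∧ ∀ i, (P i).eval w = t * (P i).eval z) := by
  obtain ⟨j₀, hj₀⟩ := hQ
  have hex : ∃ m, (Q j₀).coeff m ≠ 0 := by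
    by_contra h'
    push_neg at h'
    exact hj₀ (Polynomial.ext fun k => by simp [h' k])
  obtain ⟨m, hm⟩ := hex
  have hc : (2 * (Real.pi : ℂ) * Complex.I) ≠ 0 := by
    simp [Real.pi_ne_zero, Complex.I_ne_zero, Complex.ofReal_ne_zero]
  -- key pointwise relation
  have key : ∀ i (w : ℂ), w ≠ 0 →
      (P i).eval w * (Q j₀).coeff m = (P j₀).eval w * (Q i).coeff m := by
    intro i w hw
    have hS : Polynomial.C ((P i).eval w) * Q j₀ - Polynomial.C ((P j₀).eval w) * Q i = 0 := by
      apply Polynomial.eq_zero_of_infinite_isRoot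
      apply Set.infinite_of_injective_forall_mem
        (f := fun k : ℕ => Complex.log w + (k : ℂ) * (2 * Real.pi * Complex.I))
      · intro a b hab
        simp only [add_right_inj] at hab
        exact_mod_cast mul_right_cancel₀ hc hab
      · intro k
        have hexp : Complex.exp (Complex.log w + (k : ℂ) * (2 * Real.pi * Complex.I)) = w := by
          rw [Complex.exp_add, Complex.exp_log hw]
          have := Complex.exp_int_mul_two_pi_mul_I (k : ℤ)
          push_cast at this
          rw [this, mul_one]
        have hz := h (Complex.log w + (k : ℂ) * (2 * Real.pi * Complex.I)) i j₀
        rw [hexp] at hz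
        simp only [Set.mem_setOf_eq, Polynomial.IsRoot, Polynomial.eval_sub,
          Polynomial.eval_mul, Polynomial.eval_C]
        linear_combination hz
    have := congrArg (fun p => p.coeff m) hS
    simpa [Polynomial.coeff_C_mul, sub_eq_zero] using this
  -- the polynomial identity
  have hP : ∀ i, P i = Polynomial.C ((Q i).coeff m / (Q j₀).coeff m) * P j₀ := by
    intro i
    have hzero : P i - Polynomial.C ((Q i).coeff m / (Q j₀).coeff m) * P j₀ = 0 := by
      apply Polynomial.eq_zero_of_infinite_isRoot
      have hinf : ({0}ᶜ : Set ℂ).Infinite := (Set.finite_singleton 0).infinite_compl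
      apply Set.Infinite.mono ?_ hinf
      intro w hw
      simp only [Set.mem_compl_iff, Set.mem_singleton_iff] at hw
      simp only [Set.mem_setOf_eq, Polynomial.IsRoot, Polynomial.eval_sub,
        Polynomial.eval_mul, Polynomial.eval_C]
      have hk := key i w hw
      field_simp
      linear_combination hk
    have := sub_eq_zero.mp hzero
    exact this
  refine ⟨⟨P j₀, fun i => (Q i).coeff m / (Q j₀).coeff m, hP⟩, ?_⟩
  intro hnc z w
  have hR : ∀ z : ℂ, (P j₀).eval z ≠ 0 := by
    intro z
    obtain ⟨i, hi⟩ := hnc z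
    rw [hP i] at hi
    simp only [Polynomial.eval_mul, Polynomial.eval_C, mul_ne_zero_iff] at hi
    exact hi.2
  refine ⟨(P j₀).eval w / (P j₀).eval z, div_ne_zero (hR w) (hR z), fun i => ?_⟩
  rw [hP i]
  simp only [Polynomial.eval_mul, Polynomial.eval_C]
  generalize (Q i).coeff m / (Q j₀).coeff m = c
  field_simp
  rw [eq_div_iff (hR z)]
end
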